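/- Let F ∈ \overline{K}[[x]][y] be irreducible of degree e with Puiseux parametrization (T^e, S(T)), S(T) = Σ_i a_i T^i, and let y_1, …, y_e ∈ \overline{K}[[x^{1/e}]] be the e Puiseux series roots S(ω x^{1/e}) as ω runs over the e-th roots of unity (char K = 0 or > e). Fix a root y_a. Then the multiset ( val(y_a − y_b) : b ≠ a ) consists of the values β_k/e, each repeated E_{k−1} − E_k times, for k = 1, …, G, where (β_0 = e; β_1, …, β_G) are the characteristic exponents of F and E_k = gcd(β_0,…,β_k). -/

import Mathlib

open Polynomial PowerSeries Finset in
/-- Let `F ∈ k[[x]][y]` be irreducible of degree `e` with primitive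
Puiseux parametrization `(T^e, Σ a_i T^i)` (char `k` zero or `> e`, `k` algebraically
closed).  Its `e` Puiseux roots are `S(ω x^{1/e})` for `ω` an `e`-th root of unity; in the
variable `T` with `x = T^e` they are the series `Σ a_i ω^i T^i`.  For a fixed root `ω₀`,
the multiset of `T`-orders of the differences with the other roots (i.e. `e·val` of the
differences of Puiseux series) consists of the characteristic exponents `β_j`, each
repeated `E_{j-1} − E_j` times, for `j = 1, …, G`. -/
theorem multiset_of_root_differences {k : Type*} [Field k] [IsAlgClosed k] [DecidableEq k]
    (e : ℕ) (hepos : 0 < e)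
    (hchar : ∀ p : ℕ, CharP k p → p = 0 ∨ e < p)
    (F : Polynomial (PowerSeries k)) (hmonic : F.Monic) (hirr : Irreducible F)
    (hdeg : F.natDegree = e)
    (a : ℕ → k)
    (hparam : ∑ i ∈ range (e + 1),
        (PowerSeries.mk fun n : ℕ =>
          if e ∣ n then PowerSeries.coeff (n / e) (F.coeff i) else 0)
        * (PowerSeries.mk a) ^ i = 0)
    (hprim : ∀ q : ℕ, q ∣ e → (∀ i, a i ≠ 0 → q ∣ i) → q = 1)
    (β E : ℕ → ℕ) (Gn : ℕ)
    (hβ0 : β 0 = e)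
    (hE : ∀ j, E j = (Finset.range (j + 1)).gcd β)
    (hβ : ∀ j, 1 ≤ j → E (j - 1) ≠ 1 →
      β j = sInf {i : ℕ | a i ≠ 0 ∧ ¬ (E (j - 1) ∣ i)})
    (hGn : E Gn = 1 ∧ ∀ j < Gn, E j ≠ 1)
    (ω₀ : k) (hω₀ : ω₀ ^ e = 1) :
    ((Polynomial.nthRoots e (1 : k)).erase ω₀).map
        (fun ω => (PowerSeries.mk (fun i => a i * ω₀ ^ i)
          - PowerSeries.mk (fun i => a i * ω ^ i)).order)
      = (Finset.Icc 1 Gn).val.bind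
          (fun j => Multiset.replicate (E (j - 1) - E j) ((β j : ℕ∞))) := by
  classical
  have hω₀ne : ω₀ ≠ 0 := by
    intro h
    rw [h, zero_pow hepos.ne'] at hω₀
    exact zero_ne_one hω₀
  -- basic facts about `E`
  have hE0 : E 0 = e := by
    rw [hE 0]
    simp [hβ0]
  have hEdvd : ∀ i j : ℕ, i ≤ j → E j ∣ E i := by
    intro i j hij
    rw [hE i, hE j]
    refine Finset.dvd_gcd fun b hb => Finset.gcd_dvd ?_
    exact Finset.range_subset_range.2 (by omega) hb
  have hEe : ∀ j, E j ∣ e := fun j => hE0 ▸ hEdvd 0 j (Nat.zero_le j)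
  have hEpos : ∀ j, 0 < E j := fun j => Nat.pos_of_dvd_of_pos (hEe j) hepos
  -- roots of unity facts
  have hnz : ∀ m : ℕ, 0 < m → m ∣ e → (m : k) ≠ 0 := by
    intro m hm hme h0
    obtain ⟨p, hp⟩ := CharP.exists k
    rcases hchar p hp with rfl | hpe
    · rw [CharP.cast_eq_zero_iff k 0 m] at h0
      simp only [Nat.zero_dvd] at h0
      omega
    · rw [CharP.cast_eq_zero_iff k p m] at h0
      have h1 := Nat.le_of_dvd hm h0
      have h2 := Nat.le_of_dvd hepos hme
      omega
  have hroots : ∀ m : ℕ, 0 < m → m ∣ e →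
      (nthRoots m (1 : k)).Nodup ∧ Multiset.card (nthRoots m (1 : k)) = m := by
    intro m hm hme
    have : NeZero (m : k) := ⟨hnz m hm hme⟩
    obtain ⟨ζ, hζ⟩ := HasEnoughRootsOfUnity.exists_primitiveRoot k m
    exact ⟨hζ.nthRoots_one_nodup, hζ.card_nthRoots_one⟩
  set μ : ℕ → Multiset k := fun j => nthRoots (E j) (1 : k) with hμ
  have hμnodup : ∀ j, (μ j).Nodup := fun j => (hroots _ (hEpos j) (hEe j)).1
  have hμcard : ∀ j, Multiset.card (μ j) = E j := fun j => (hroots _ (hEpos j) (hEe j)).2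
  have hμle : ∀ i j : ℕ, i ≤ j → μ j ≤ μ i := by
    intro i j hij
    rw [Multiset.le_iff_subset (hμnodup j)]
    intro x hx
    rw [hμ, mem_nthRoots (hEpos j)] at hx
    rw [hμ, mem_nthRoots (hEpos i)]
    obtain ⟨c, hc⟩ := hEdvd i j hij
    rw [hc, pow_mul, hx, one_pow]
  -- telescoping decomposition
  have htel : ∀ n : ℕ, μ 0 - μ n
      = (Finset.Icc 1 n).val.bind (fun j => μ (j - 1) - μ j) := by
    intro n
    induction n with
    | zero => simp
    | succ n ih =>
      have hins : Finset.Icc 1 (n + 1) = insert (n + 1) (Finset.Icc 1 n) := by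
        ext x
        simp only [Finset.mem_Icc, Finset.mem_insert]
        omega
      have hnm : (n + 1) ∉ Finset.Icc 1 n := by simp
      rw [hins, Finset.insert_val_of_notMem hnm, Multiset.cons_bind, ← ih]
      have := tsub_add_tsub_cancel (hμle 0 n (Nat.zero_le n)) (hμle n (n + 1) (by omega))
      rw [add_comm] at this
      simpa using this.symm
  -- the erased multiset of all e-th roots of unity
  have hμGn : μ Gn = {(1 : k)} := by
    rw [hμ]
    simp only [hGn.1]
    rw [nthRoots, pow_one, roots_X_sub_C]
  have herase1 : (nthRoots e (1 : k)).erase 1 = μ 0 - μ Gn := by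
    rw [hμGn, Multiset.sub_singleton, hμ]
    simp only [hE0]
  -- change of variables ω = ω₀ ζ
  have hinj : Function.Injective (fun ζ : k => ω₀ * ζ) := mul_right_injective₀ hω₀ne
  have hmape : (nthRoots e (1 : k)).map (fun ζ => ω₀ * ζ) = nthRoots e (1 : k) := by
    refine Multiset.eq_of_le_of_card_le ?_ (by simp)
    rw [Multiset.le_iff_subset (((hroots e hepos dvd_rfl).1).map hinj)]
    intro x hx
    rw [Multiset.mem_map] at hx
    obtain ⟨ζ, hζ, rfl⟩ := hx
    rw [mem_nthRoots hepos] at hζ ⊢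
    rw [mul_pow, hω₀, hζ, one_mul]
  have hkey : (nthRoots e (1 : k)).erase ω₀
      = ((nthRoots e (1 : k)).erase 1).map (fun ζ => ω₀ * ζ) := by
    rw [Multiset.map_erase _ hinj, hmape, mul_one]
  rw [hkey, Multiset.map_map, herase1, htel Gn, Multiset.map_bind]
  refine Multiset.bind_congr fun j hj => ?_
  rw [Finset.mem_val, Finset.mem_Icc] at hj
  obtain ⟨h1j, hjG⟩ := hj
  -- facts about β j and E for this j
  have hEj1ne1 : E (j - 1) ≠ 1 := hGn.2 (j - 1) (by omega)
  have hSne : {i : ℕ | a i ≠ 0 ∧ ¬ E (j - 1) ∣ i}.Nonempty := by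
    by_contra h
    apply hEj1ne1
    refine hprim _ (hEe _) fun i hi => ?_
    by_contra hdvd
    exact h (Set.nonempty_of_mem (show i ∈ {i : ℕ | a i ≠ 0 ∧ ¬ E (j - 1) ∣ i} from ⟨hi, hdvd⟩))
  have hβj := hβ j h1j hEj1ne1
  have hmem : a (β j) ≠ 0 ∧ ¬ E (j - 1) ∣ β j := by
    have := Nat.sInf_mem hSne
    rwa [← hβj] at this
  have hlow : ∀ i, i < β j → a i ≠ 0 → E (j - 1) ∣ i := by
    intro i hi ha
    by_contra h
    exact Nat.notMem_of_lt_sInf (hβj ▸ hi)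
      (show i ∈ {i : ℕ | a i ≠ 0 ∧ ¬ E (j - 1) ∣ i} from ⟨ha, h⟩)
  have hEgcd : E j = gcd (β j) (E (j - 1)) := by
    have hj1 : j - 1 + 1 = j := by omega
    rw [hE j, hE (j - 1), hj1, Finset.range_add_one, Finset.gcd_insert]
  -- compute the order on each piece
  have hpiece : ∀ ζ ∈ μ (j - 1) - μ j,
      ((fun ω => (PowerSeries.mk (fun i => a i * ω₀ ^ i)
          - PowerSeries.mk (fun i => a i * ω ^ i)).order) ∘ fun ζ => ω₀ * ζ) ζ
        = ((β j : ℕ∞)) := by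
    intro ζ hζ
    have hζ1 : ζ ∈ μ (j - 1) := Multiset.mem_of_le (tsub_le_self) hζ
    have hζ2 : ζ ∉ μ j := by
      intro hin
      have h1 : 1 ≤ Multiset.count ζ (μ (j - 1) - μ j) :=
        Multiset.one_le_count_iff_mem.mpr hζ
      rw [Multiset.count_sub] at h1
      have h2 : Multiset.count ζ (μ (j - 1)) ≤ 1 :=
        Multiset.nodup_iff_count_le_one.mp (hμnodup _) ζ
      have h3 : 1 ≤ Multiset.count ζ (μ j) := Multiset.one_le_count_iff_mem.mpr hin
      omega
    rw [hμ, mem_nthRoots (hEpos _)] at hζ1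
    have hz2 : ζ ^ E j ≠ 1 := by
      intro h
      exact hζ2 ((mem_nthRoots (hEpos j)).mpr h)
    have hzord : ζ ^ β j ≠ 1 := by
      intro hpow
      apply hz2
      have h1 : orderOf ζ ∣ β j := orderOf_dvd_of_pow_eq_one hpow
      have h2 : orderOf ζ ∣ E (j - 1) := orderOf_dvd_of_pow_eq_one hζ1
      have h3 : orderOf ζ ∣ E j := hEgcd ▸ dvd_gcd h1 h2
      exact orderOf_dvd_iff_pow_eq_one.mp h3
    have hcoeff : ∀ n : ℕ,
        (PowerSeries.coeff n) (PowerSeries.mk (fun i => a i * ω₀ ^ i)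
          - PowerSeries.mk (fun i => a i * (ω₀ * ζ) ^ i))
        = a n * ω₀ ^ n * (1 - ζ ^ n) := by
      intro n
      rw [map_sub, coeff_mk, coeff_mk, mul_pow]
      ring
    show (PowerSeries.mk (fun i => a i * ω₀ ^ i)
        - PowerSeries.mk (fun i => a i * (ω₀ * ζ) ^ i)).order = ((β j : ℕ∞))
    rw [order_eq_nat]
    constructor
    · rw [hcoeff]
      exact mul_ne_zero (mul_ne_zero hmem.1 (pow_ne_zero _ hω₀ne))
        (sub_ne_zero.mpr (Ne.symm hzord))
    · intro i hi
      rw [hcoeff]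
      rcases eq_or_ne (a i) 0 with h | h
      · rw [h]; ring
      · obtain ⟨c, hc⟩ := hlow i hi h
        have hz : ζ ^ i = 1 := by rw [hc, pow_mul, hζ1, one_pow]
        rw [hz, sub_self, mul_zero]
  rw [Multiset.eq_replicate]
  refine ⟨?_, fun b hb => ?_⟩
  · rw [Multiset.card_map, Multiset.card_sub (hμle (j - 1) j (by omega)), hμcard, hμcard]
  · rw [Multiset.mem_map] at hb
    obtain ⟨ζ, hζ, rfl⟩ := hb
    exact hpiece ζ hζ
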